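/- Let G be a connected graph with maximum degree Δ ≥ 3 and γ ≥ 2 whose minimum degree δ satisfies δ ≤ Δ-1 (i.e., G is not regular). Then χ_γ(G) ≤ M-1, where M = Δ·((Δ-1)^γ - 1)/(Δ-2). -/

import Mathlib

set_option linter.unusedSectionVars false

open Finset


section Greedy
variable {V : Type*} [Fintype V] [DecidableEq V]

noncomputable def greedy (H : SimpleGraph V) [DecidableRel H.Adj] (f : V → ℕ) (k : ℕ)
    (hk : 0 < k) (v : V) : Fin k :=
  let prev : Finset V := Finset.univ.filter (fun w => H.Adj v w ∧ f w < f v)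
  let used : Finset (Fin k) := prev.attach.image (fun w =>
    greedy H f k hk w.1)
  if h : (Finset.univ \ used).Nonempty then h.choose else ⟨0, hk⟩
termination_by f v
decreasing_by
  · have := w.2
    simp only [prev, Finset.mem_filter] at this
    exact this.2.2

theorem greedy_valid (H : SimpleGraph V) [DecidableRel H.Adj] (f : V → ℕ) (k : ℕ) (hk : 0 < k)
    (hcard : ∀ v, (Finset.univ.filter (fun w => H.Adj v w ∧ f w < f v)).card < k)
    {v w : V} (ha : H.Adj v w) (hf : f w < f v) :
    greedy H f k hk v ≠ greedy H f k hk w := by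
  set prev : Finset V := Finset.univ.filter (fun x => H.Adj v x ∧ f x < f v) with hprev
  set used : Finset (Fin k) := prev.attach.image (fun x => greedy H f k hk x.1) with hused
  have hne : (Finset.univ \ used).Nonempty := by
    apply Finset.sdiff_nonempty.mpr
    intro hsub
    have h1 : (Finset.univ : Finset (Fin k)).card ≤ used.card := Finset.card_le_card hsub
    have h2 : used.card ≤ prev.card := Finset.card_image_le.trans (by simp)
    have h3 : prev.card < k := hcard v
    simp [Fintype.card_fin] at h1
    omega
  have hv : greedy H f k hk v = hne.choose := by
    rw [greedy]
    exact dif_pos hne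
  have hmem : greedy H f k hk w ∈ used := by
    rw [hused]
    apply Finset.mem_image.mpr
    exact ⟨⟨w, by simp [hprev, ha, hf]⟩, Finset.mem_attach _ _, rfl⟩
  have : hne.choose ∉ used := (Finset.mem_sdiff.mp hne.choose_spec).2
  rw [hv]
  intro h
  exact this (h ▸ hmem)

theorem greedy_colorable (H : SimpleGraph V) [DecidableRel H.Adj] (f : V → ℕ)
    (hf : Function.Injective f) (k : ℕ)
    (hcard : ∀ v, (Finset.univ.filter (fun w => H.Adj v w ∧ f w < f v)).card < k) :
    H.Colorable k := by
  cases isEmpty_or_nonempty V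
  · exact ⟨⟨fun v => (IsEmpty.false v).elim, fun {a} => (IsEmpty.false a).elim⟩⟩
  · have hk : 0 < k := Nat.pos_of_ne_zero fun h => by simpa [h] using hcard (Classical.arbitrary V)
    refine ⟨SimpleGraph.Coloring.mk (greedy H f k hk) ?_⟩
    intro v w ha
    rcases lt_or_gt_of_ne (fun h => ha.ne (hf h)) with h | h
    · exact (greedy_valid H f k hk hcard ha.symm h).symm
    · exact greedy_valid H f k hk hcard ha h

end Greedy

section Dist
variable {V : Type*} {G : SimpleGraph V}

theorem exists_pred (hconn : G.Connected) {u v : V} {k : ℕ} (h : G.dist u v = k + 1) :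
    ∃ w, G.Adj w v ∧ G.dist u w = k := by
  obtain ⟨p, hp⟩ := (hconn u v).exists_walk_length_eq_dist
  have hne : v ≠ u := by
    rintro rfl; rw [SimpleGraph.dist_self] at h; omega
  obtain ⟨w, hadj, q, hq⟩ := SimpleGraph.Walk.exists_eq_cons_of_ne hne p.reverse
  have hlq : q.length = k := by
    have := congrArg SimpleGraph.Walk.length hq
    simp [hp, h] at this
    omega
  refine ⟨w, hadj.symm, le_antisymm ?_ ?_⟩
  · calc G.dist u w ≤ q.reverse.length := SimpleGraph.dist_le _
      _ = k := by simp [hlq]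
  · have htri := hconn.dist_triangle (u := u) (v := w) (w := v)
    rw [SimpleGraph.dist_eq_one_iff_adj.mpr hadj.symm] at htri
    omega

end Dist

section Sphere
variable {V : Type*} [Fintype V] [DecidableEq V] (G : SimpleGraph V) [DecidableRel G.Adj]

/-- the set of vertices at distance exactly `k` from `v`. -/
noncomputable def sph (v : V) (k : ℕ) : Finset V := Finset.univ.filter (fun w => G.dist v w = k)

lemma sph_one (v : V) : sph G v 1 = G.neighborFinset v := by
  ext w
  simp [sph, SimpleGraph.dist_eq_one_iff_adj]

lemma sph_succ_card (hconn : G.Connected) (v : V) (k : ℕ) (hk : 1 ≤ k) :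
    (sph G v (k + 1)).card ≤ ∑ w ∈ sph G v k, (G.degree w - 1) := by
  have hsub : sph G v (k+1) ⊆ (sph G v k).biUnion
      (fun w => G.neighborFinset w ∩ sph G v (k+1)) := by
    intro x hx
    simp only [sph, Finset.mem_filter, Finset.mem_univ, true_and] at hx
    obtain ⟨w, hadj, hdw⟩ := exists_pred hconn hx
    refine Finset.mem_biUnion.mpr ⟨w, ?_, ?_⟩
    · simp [sph, hdw]
    · simp [sph, hx, hadj]
  refine (Finset.card_le_card hsub).trans ((Finset.card_biUnion_le).trans ?_)
  apply Finset.sum_le_sum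
  intro w hw
  simp only [sph, Finset.mem_filter, Finset.mem_univ, true_and] at hw
  obtain ⟨k', rfl⟩ : ∃ k', k = k' + 1 := ⟨k - 1, by omega⟩
  obtain ⟨p, hpadj, hpd⟩ := exists_pred hconn hw
  have hsub2 : G.neighborFinset w ∩ sph G v (k' + 1 + 1) ⊆ (G.neighborFinset w).erase p := by
    intro x hx
    simp only [Finset.mem_inter, sph, Finset.mem_filter, Finset.mem_univ, true_and] at hx
    refine Finset.mem_erase.mpr ⟨?_, hx.1⟩
    rintro rfl
    omega
  calc (G.neighborFinset w ∩ sph G v (k' + 1 + 1)).card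
      ≤ ((G.neighborFinset w).erase p).card := Finset.card_le_card hsub2
    _ = G.degree w - 1 := by
        rw [Finset.card_erase_of_mem (by simpa using hpadj.symm), SimpleGraph.card_neighborFinset_eq_degree]

end Sphere

theorem sph_mem {V : Type*} [Fintype V] (G : SimpleGraph V) (v w : V) (k : ℕ) :
    w ∈ sph G v k ↔ G.dist v w = k := by simp [sph]

lemma geom_mul (a : ℕ) : ∀ n : ℕ, (∑ i ∈ range n, (a+1)^i) * a = (a+1)^n - 1 := by
  intro n
  induction n with
  | zero => simp
  | succ n ih =>
    rw [Finset.sum_range_succ, add_mul, ih, pow_succ]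
    have h1 : 1 ≤ (a+1)^n := Nat.one_le_pow _ _ (by omega)
    have h2 : (a+1)^n * (a+1) = (a+1)^n * a + (a+1)^n := by ring
    omega




/-- The γ-th power of a graph: two vertices are adjacent iff their distance in G is at most γ. -/
def SimpleGraph.power {V : Type*} (G : SimpleGraph V) (γ : ℕ) : SimpleGraph V where
  Adj u v := u ≠ v ∧ G.Reachable u v ∧ G.dist u v ≤ γ
  symm := ⟨fun u v => by
    rintro ⟨h1, h2, h3⟩
    exact ⟨h1.symm, h2.symm, by rwa [SimpleGraph.dist_comm]⟩⟩
  loopless := ⟨fun v => by simp⟩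

noncomputable instance {V : Type*} (G : SimpleGraph V) (γ : ℕ) :
    DecidableRel (G.power γ).Adj := Classical.decRel _

/-- If G is not regular (δ ≤ Δ-1), then χ_γ(G) ≤ M-1. -/
theorem chromaticNumber_le_of_nonregular {V : Type*} [Fintype V] [DecidableEq V]
    (G : SimpleGraph V) [DecidableRel G.Adj] (hconn : G.Connected) (Δ δ γ : ℕ)
    (hΔ : G.maxDegree = Δ) (hδ : G.minDegree = δ) (h3 : 3 ≤ Δ) (hγ : 2 ≤ γ)
    (hnr : δ ≤ Δ - 1) :
    (G.power γ).chromaticNumber ≤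
      ((Δ * ((Δ - 1) ^ γ - 1) / (Δ - 2) - 1 : ℕ) : ℕ∞) := by
  classical
  obtain ⟨b, rfl⟩ : ∃ b, Δ = b + 3 := ⟨Δ - 3, by omega⟩
  obtain ⟨g, rfl⟩ : ∃ g, γ = g + 2 := ⟨γ - 2, by omega⟩
  have hnr' : δ ≤ b + 2 := by omega
  have hneV : Nonempty V := hconn.nonempty
  obtain ⟨u, hu⟩ := G.exists_minimal_degree_vertex
  have hdegu : G.degree u = δ := by rw [← hu, hδ]
  have hdeg : ∀ w, G.degree w ≤ b + 3 := fun w => hΔ ▸ G.degree_le_maxDegree w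
  set n := Fintype.card V with hn
  have hdistlt : ∀ v w : V, G.dist v w < n := by
    intro v w
    obtain ⟨p, hp, hl⟩ := (hconn v w).exists_path_of_dist
    rw [← hl]; exact hp.length_lt
  -- the ordering function
  set e := Fintype.equivFin V with he
  set f : V → ℕ := fun v => (n - 1 - G.dist u v) * n + (e v) with hf
  have hfv : ∀ v : V, f v = (n - 1 - G.dist u v) * n + (e v) := fun _ => rfl
  have hen : ∀ v : V, (e v : ℕ) < n := fun v => (e v).2
  have hfmono : ∀ v w : V, G.dist u w < G.dist u v → f v < f w := by
    intro v w hd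
    have h1 := hdistlt u v
    have h2 := hdistlt u w
    have hA : n - 1 - G.dist u v + 1 ≤ n - 1 - G.dist u w := by omega
    calc f v < (n - 1 - G.dist u v) * n + n := by
          rw [hfv]; exact Nat.add_lt_add_left (hen v) _
      _ = (n - 1 - G.dist u v + 1) * n := by ring
      _ ≤ (n - 1 - G.dist u w) * n := Nat.mul_le_mul_right _ hA
      _ ≤ f w := by rw [hfv]; exact Nat.le_add_right _ _
  have hfinj : Function.Injective f := by
    intro v w hvw
    rcases lt_trichotomy (G.dist u v) (G.dist u w) with h | h | h
    · exact absurd hvw (Nat.ne_of_gt (hfmono w v h))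
    · rw [hfv, hfv, h] at hvw
      have : (e v : ℕ) = (e w : ℕ) := by omega
      exact e.injective (Fin.ext this)
    · exact absurd hvw (Nat.ne_of_lt (hfmono v w h))
  -- sphere apparatus
  have hstep : ∀ (v : V) (k : ℕ), 1 ≤ k →
      (sph G v (k+1)).card ≤ (b+2) * (sph G v k).card := by
    intro v k hk
    refine (sph_succ_card G hconn v k hk).trans ?_
    calc ∑ w ∈ sph G v k, (G.degree w - 1)
        ≤ ∑ _w ∈ sph G v k, (b+2) := sum_le_sum fun w _ => by have := hdeg w; omega
      _ = (sph G v k).card * (b+2) := by rw [sum_const, smul_eq_mul]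
      _ = (b+2) * (sph G v k).card := mul_comm _ _
  have hpow : ∀ (v : V) (m j : ℕ), 1 ≤ m →
      (sph G v (m+j)).card ≤ (b+2)^j * (sph G v m).card := by
    intro v m j hm
    induction j with
    | zero => simp
    | succ j ih =>
      calc (sph G v (m+(j+1))).card = (sph G v ((m+j)+1)).card := by ring_nf
        _ ≤ (b+2) * (sph G v (m+j)).card := hstep v (m+j) (by omega)
        _ ≤ (b+2) * ((b+2)^j * (sph G v m).card) := Nat.mul_le_mul_left _ ih
        _ = (b+2)^(j+1) * (sph G v m).card := by ring
  have hsph1 : ∀ v : V, (sph G v 1).card = G.degree v := by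
    intro v; rw [sph_one]; exact G.card_neighborFinset_eq_degree v
  set ball : V → Finset V := fun v => univ.filter (fun w => w ≠ v ∧ G.dist v w ≤ g + 2)
    with hballdef
  have hballmem : ∀ v w : V, w ∈ ball v ↔ (w ≠ v ∧ G.dist v w ≤ g + 2) := by
    intro v w; simp [hballdef]
  have hball : ∀ v, (ball v).card ≤ ∑ j ∈ range (g+2), (sph G v (j+1)).card := by
    intro v
    refine (card_le_card ?_).trans card_biUnion_le
    intro w hw
    rw [hballmem] at hw
    have hpos : 0 < G.dist v w := (hconn.pos_dist_of_ne (Ne.symm hw.1))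
    refine mem_biUnion.mpr ⟨G.dist v w - 1, mem_range.mpr (by omega), ?_⟩
    rw [sph_mem]
    omega
  set S' : ℕ := ∑ i ∈ range (g+1), (b+2)^i with hS'
  set S : ℕ := ∑ i ∈ range (g+2), (b+2)^i with hS
  have hS'pos : 1 ≤ S' := by
    have : (0:ℕ) < S' := Finset.sum_pos (fun i _ => pow_pos (by omega) i) ⟨0, by simp⟩
    omega
  have hSsplit : S = (b+2) * S' + 1 := by
    rw [hS, Finset.sum_range_succ', hS']
    simp [pow_succ, mul_comm, Finset.mul_sum]
  set M : ℕ := (b+3) * S with hM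
  have hSge : 3 ≤ S := by
    have : 2 * 1 ≤ (b+2) * S' := Nat.mul_le_mul (by omega) hS'pos
    omega
  have hMge : 9 ≤ M := by
    have : 3 * 3 ≤ (b+3) * S := Nat.mul_le_mul (by omega) hSge
    omega
  -- the generic ball bound
  have hballgen : ∀ v : V, (ball v).card ≤ G.degree v * S := by
    intro v
    refine (hball v).trans ?_
    calc ∑ j ∈ range (g+2), (sph G v (j+1)).card
        ≤ ∑ j ∈ range (g+2), (b+2)^j * (sph G v 1).card := by
          refine sum_le_sum fun j _ => ?_
          have := hpow v 1 j le_rfl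
          rwa [add_comm 1 j] at this
      _ = S * (sph G v 1).card := by rw [← Finset.sum_mul]
      _ = G.degree v * S := by rw [hsph1, mul_comm]
  -- goal arithmetic
  have hgeom : S * (b+1) = (b+2)^(g+2) - 1 := geom_mul (b+1) (g+2)
  have harith : (b+3) * ((b + 3 - 1) ^ (g+2) - 1) / (b + 3 - 2) - 1 = M - 1 := by
    have h1 : b + 3 - 1 = b + 2 := by omega
    have h2 : b + 3 - 2 = b + 1 := by omega
    rw [h1, h2, ← hgeom, ← mul_assoc, Nat.mul_div_cancel _ (by omega : 0 < b + 1), hM]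
  rw [harith]
  -- the coloring
  refine SimpleGraph.Colorable.chromaticNumber_le ?_
  refine greedy_colorable (G.power (g+2)) f hfinj (M-1) ?_
  intro v
  set C := univ.filter (fun w => (G.power (g+2)).Adj v w ∧ f w < f v) with hCdef
  suffices hsuff : C.card ≤ M - 2 by omega
  have hCsub : C ⊆ ball v := by
    intro w hw
    rw [hCdef, mem_filter] at hw
    obtain ⟨hne, _, hd⟩ : v ≠ w ∧ G.Reachable v w ∧ G.dist v w ≤ g + 2 := hw.2.1
    exact (hballmem v w).mpr ⟨Ne.symm hne, hd⟩
  have hCnot : ∀ w : V, G.dist u w < G.dist u v → w ∉ C := by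
    intro w hd hw
    rw [hCdef, mem_filter] at hw
    exact absurd hw.2.2 (not_lt.mpr (le_of_lt (hfmono v w hd)))
  rcases hd : G.dist u v with _ | d
  · -- v = u
    obtain rfl : u = v := hconn.dist_eq_zero_iff.mp hd
    have h1 : C.card ≤ δ * S := by
      rw [← hdegu]; exact (card_le_card hCsub).trans (hballgen u)
    have h2 : δ * S ≤ (b+2) * S := Nat.mul_le_mul_right _ hnr'
    have h3 : (b+3) * S = (b+2) * S + S := by ring
    omega
  · obtain ⟨w1, hw1adj, hw1d⟩ := exists_pred hconn hd
    rcases d with _ | d2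
    · -- dist u v = 1, i.e. v adjacent to u
      obtain rfl : u = w1 := hconn.dist_eq_zero_iff.mp hw1d
      -- refined second-sphere bound
      have humem : u ∈ sph G v 1 := by
        rw [sph_mem, SimpleGraph.dist_eq_one_iff_adj]
        exact hw1adj.symm
      have hc2 : (sph G v 2).card ≤ (b+3) * (b+2) - 1 := by
        refine (sph_succ_card G hconn v 1 le_rfl).trans ?_
        rw [← Finset.add_sum_erase _ _ humem]
        have hrest : ∑ w ∈ (sph G v 1).erase u, (G.degree w - 1)
            ≤ ((sph G v 1).erase u).card * (b+2) := by
          refine Finset.sum_le_card_nsmul _ _ _ fun w _ => ?_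
          have := hdeg w; omega
        have hcarderase : ((sph G v 1).erase u).card ≤ b + 2 := by
          rw [Finset.card_erase_of_mem humem, hsph1]
          have := hdeg v; omega
        have h4 : ((sph G v 1).erase u).card * (b+2) ≤ (b+2) * (b+2) :=
          Nat.mul_le_mul_right _ hcarderase
        have h5 : G.degree u - 1 ≤ b + 1 := by omega
        have h6 : (b+1) + (b+2)*(b+2) + 1 = (b+3)*(b+2) := by ring
        omega
      -- refined ball bound
      have hballv : (ball v).card ≤ (b+3) + ((b+3)*(b+2) - 1) * S' := by
        refine (hball v).trans ?_
        rw [Finset.sum_range_succ']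
        have h7 : ∑ j ∈ range (g+1), (sph G v (j+1+1)).card
            ≤ ((b+3)*(b+2) - 1) * S' := by
          calc ∑ j ∈ range (g+1), (sph G v (j+1+1)).card
              ≤ ∑ j ∈ range (g+1), (b+2)^j * (sph G v 2).card := by
                refine sum_le_sum fun j _ => ?_
                have := hpow v 2 j (by omega)
                rwa [show 2 + j = j + 1 + 1 by omega] at this
            _ = S' * (sph G v 2).card := by rw [← Finset.sum_mul]
            _ ≤ S' * ((b+3)*(b+2) - 1) := Nat.mul_le_mul_left _ hc2
            _ = ((b+3)*(b+2) - 1) * S' := mul_comm _ _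
        have h8 : (sph G v (0+1)).card ≤ b + 3 := by
          rw [hsph1]; exact hdeg v
        omega
      -- u is in ball v but not in C
      have humem2 : u ∈ ball v := by
        rw [hballmem]
        refine ⟨hw1adj.ne, ?_⟩
        rw [SimpleGraph.dist_eq_one_iff_adj.mpr hw1adj.symm]
        omega
      have hunotC : u ∉ C := hCnot u (by omega)
      have hCsub2 : C ⊆ (ball v).erase u := by
        intro w hw
        exact Finset.mem_erase.mpr ⟨fun h => hunotC (h ▸ hw), hCsub hw⟩
      have h9 : C.card ≤ (ball v).card - 1 := by
        refine (card_le_card hCsub2).trans ?_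
        rw [Finset.card_erase_of_mem humem2]
      -- arithmetic
      set P : ℕ := (b+3)*(b+2)*S' with hP
      have hP1 : ((b+3)*(b+2) - 1) * S' + S' = P := by
        rw [hP, Nat.sub_mul, one_mul]
        have : S' ≤ (b+3)*(b+2)*S' := by
          calc S' = 1 * S' := (one_mul _).symm
            _ ≤ (b+3)*(b+2)*S' := Nat.mul_le_mul_right _ (by nlinarith)
        omega
      have hP2 : M = (b+3) + P := by rw [hM, hSsplit, hP]; ring
      omega
    · -- dist u v = d2 + 2
      obtain ⟨w2, hw2adj, hw2d⟩ := exists_pred hconn hw1d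
      have hw1mem : w1 ∈ ball v := by
        rw [hballmem]
        constructor
        · rintro rfl; omega
        · rw [SimpleGraph.dist_eq_one_iff_adj.mpr hw1adj.symm]; omega
      have hdvw1 : G.dist v w1 = 1 := SimpleGraph.dist_eq_one_iff_adj.mpr hw1adj.symm
      have hw2mem : w2 ∈ ball v := by
        rw [hballmem]
        constructor
        · rintro rfl; omega
        · have htri := hconn.dist_triangle (u := v) (v := w1) (w := w2)
          rw [hdvw1, SimpleGraph.dist_eq_one_iff_adj.mpr hw2adj.symm] at htri
          omega
      have hne12 : w2 ≠ w1 := by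
        rintro rfl; omega
      have hw1notC : w1 ∉ C := hCnot w1 (by omega)
      have hw2notC : w2 ∉ C := hCnot w2 (by omega)
      have hCsub2 : C ⊆ ((ball v).erase w1).erase w2 := by
        intro w hw
        refine Finset.mem_erase.mpr ⟨fun h => hw2notC (h ▸ hw), ?_⟩
        exact Finset.mem_erase.mpr ⟨fun h => hw1notC (h ▸ hw), hCsub hw⟩
      have h9 : C.card ≤ (ball v).card - 2 := by
        refine (card_le_card hCsub2).trans ?_
        rw [Finset.card_erase_of_mem (Finset.mem_erase.mpr ⟨hne12, hw2mem⟩),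
          Finset.card_erase_of_mem hw1mem]
        omega
      have h10 : (ball v).card ≤ (b+3) * S := by
        refine (hballgen v).trans (Nat.mul_le_mul_right _ (hdeg v))
      omega
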